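/- Bound on the remainder terms (estimate (4.42)): Given resolvent data and a real-valued C¹ function q on [0,L] with q(0) = 0, define R₁ = Re ∫₀ᴸ 2μ·q·( f₄·conj(P′) + conj(f₃′)·Θ ) dx, R₂ = Re ∫₀ᴸ 2ρ·q·( f₂·conj(V′) + Φ·conj(f₁′) ) dx, N² = ∫₀ᴸ( ρ|Φ|² + μ|Θ|² + α₁|V′|² + β|γV′ − P′|² ) dx, and ‖F‖² = ∫₀ᴸ( ρ|f₂|² + μ|f₄|² + α₁|f₁′|² + β|γf₁′ − f₃′|² ) dx + m₁|f₅|² + m₂|f₆|². Then there exists a constant C > 0, depending only on ρ, μ, α₁, β, γ and sup_{[0,L]}|q| (and not on the resolvent data or λ), such that |R₁| ≤ C·N·‖F‖ and |R₂| ≤ C·N·‖F‖. -/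

import Mathlib

open Complex

/-- Resolvent data for the damped piezoelectric beam system with magnetic effect and
tip body: solutions of the resolvent (spectral) equation `iλU − AU = F` written in
components, together with the boundary conditions. -/
structure ResolventData (ρ μ β m₁ m₂ ξ₁ ξ₂ γ α₁ α L lam : ℝ) where
  V : ℝ → ℂ
  P : ℝ → ℂ
  Φ : ℝ → ℂ
  Θ : ℝ → ℂ
  f₁ : ℝ → ℂ
  f₂ : ℝ → ℂ
  f₃ : ℝ → ℂ
  f₄ : ℝ → ℂ
  u : ℂ
  η : ℂ
  f₅ : ℂ
  f₆ : ℂ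
  hV : ContDiff ℝ 2 V
  hP : ContDiff ℝ 2 P
  hΦ : ContDiff ℝ 1 Φ
  hΘ : ContDiff ℝ 1 Θ
  hf₁ : ContDiff ℝ 1 f₁
  hf₃ : ContDiff ℝ 1 f₃
  hf₂ : Continuous f₂
  hf₄ : Continuous f₄
  eq1 : ∀ x ∈ Set.Icc (0:ℝ) L, Complex.I * (lam : ℂ) * V x - Φ x = f₁ x
  eq2 : ∀ x ∈ Set.Icc (0:ℝ) L,
    Complex.I * (lam : ℂ) * (ρ : ℂ) * Φ x - (α : ℂ) * deriv (deriv V) x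
      + (γ : ℂ) * (β : ℂ) * deriv (deriv P) x = (ρ : ℂ) * f₂ x
  eq3 : ∀ x ∈ Set.Icc (0:ℝ) L, Complex.I * (lam : ℂ) * P x - Θ x = f₃ x
  eq4 : ∀ x ∈ Set.Icc (0:ℝ) L,
    Complex.I * (lam : ℂ) * (μ : ℂ) * Θ x - (β : ℂ) * deriv (deriv P) x
      + (γ : ℂ) * (β : ℂ) * deriv (deriv V) x = (μ : ℂ) * f₄ x
  bV0 : V 0 = 0
  bP0 : P 0 = 0
  bΦ0 : Φ 0 = 0
  bΘ0 : Θ 0 = 0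
  bΦL : Φ L = u
  bΘL : Θ L = η
  bu : (Complex.I * (lam : ℂ) * (m₁ : ℂ) + (ξ₁ : ℂ)) * u + (α : ℂ) * deriv V L
      - (γ : ℂ) * (β : ℂ) * deriv P L = (m₁ : ℂ) * f₅
  bη : (Complex.I * (lam : ℂ) * (m₂ : ℂ) + (ξ₂ : ℂ)) * η + (β : ℂ) * deriv P L
      - (γ : ℂ) * (β : ℂ) * deriv V L = (m₂ : ℂ) * f₆

variable {ρ μ β m₁ m₂ ξ₁ ξ₂ γ α₁ α L lam : ℝ}

/-- The squared interior norm `N²` of the resolvent data. -/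
noncomputable def Nsq (D : ResolventData ρ μ β m₁ m₂ ξ₁ ξ₂ γ α₁ α L lam) : ℝ :=
  ∫ x in (0:ℝ)..L,
    (ρ * ‖D.Φ x‖ ^ 2 + μ * ‖D.Θ x‖ ^ 2
      + α₁ * ‖deriv D.V x‖ ^ 2
      + β * ‖(γ : ℂ) * deriv D.V x - deriv D.P x‖ ^ 2)

/-- The squared state-space norm `‖U‖²` of the resolvent data. -/
noncomputable def Usq (D : ResolventData ρ μ β m₁ m₂ ξ₁ ξ₂ γ α₁ α L lam) : ℝ :=
  Nsq D + m₁ * ‖D.u‖ ^ 2 + m₂ * ‖D.η‖ ^ 2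

/-- The squared state-space norm `‖F‖²` of the right-hand side of the resolvent
equation. -/
noncomputable def Fsq (D : ResolventData ρ μ β m₁ m₂ ξ₁ ξ₂ γ α₁ α L lam) : ℝ :=
  (∫ x in (0:ℝ)..L,
      (ρ * ‖D.f₂ x‖ ^ 2 + μ * ‖D.f₄ x‖ ^ 2
        + α₁ * ‖deriv D.f₁ x‖ ^ 2
        + β * ‖(γ : ℂ) * deriv D.f₁ x - deriv D.f₃ x‖ ^ 2))
    + m₁ * ‖D.f₅‖ ^ 2 + m₂ * ‖D.f₆‖ ^ 2


section Helpers

lemma sqrt_bound {c a m : ℝ} (hc : 0 < c) (ha : 0 ≤ a) (h : c * a ^ 2 ≤ m) :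
    a ≤ Real.sqrt m / Real.sqrt c := by
  have hm : 0 ≤ m := le_trans (by positivity) h
  have h2 : a ^ 2 ≤ m / c := (le_div_iff₀ hc).2 (by nlinarith)
  calc a = Real.sqrt (a ^ 2) := (Real.sqrt_sq ha).symm
    _ ≤ Real.sqrt (m / c) := Real.sqrt_le_sqrt h2
    _ = Real.sqrt m / Real.sqrt c := Real.sqrt_div hm c

lemma sqrt_bound' {c m : ℝ} (hc : 0 < c) {z : ℂ} (h : c * ‖z‖ ^ 2 ≤ m) :
    ‖z‖ ≤ (1 / Real.sqrt c) * Real.sqrt m := by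
  calc ‖z‖ ≤ Real.sqrt m / Real.sqrt c := sqrt_bound hc (norm_nonneg z) h
    _ = (1 / Real.sqrt c) * Real.sqrt m := by ring

lemma decomp_bound {α₁ β γ : ℝ} (hα₁ : 0 < α₁) (hβ : 0 < β) {v p : ℂ} {m : ℝ}
    (h1 : α₁ * ‖v‖ ^ 2 ≤ m) (h2 : β * ‖(γ : ℂ) * v - p‖ ^ 2 ≤ m) :
    ‖p‖ ≤ (|γ| / Real.sqrt α₁ + 1 / Real.sqrt β) * Real.sqrt m := by
  have hv := sqrt_bound hα₁ (norm_nonneg v) h1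
  have hw := sqrt_bound hβ (norm_nonneg _) h2
  have key : ‖p‖ ≤ |γ| * ‖v‖ + ‖(γ : ℂ) * v - p‖ := by
    calc ‖p‖ = ‖(γ : ℂ) * v - ((γ : ℂ) * v - p)‖ := by
          rw [show (γ : ℂ) * v - ((γ : ℂ) * v - p) = p from by ring]
      _ ≤ ‖(γ : ℂ) * v‖ + ‖(γ : ℂ) * v - p‖ := norm_sub_le _ _
      _ = |γ| * ‖v‖ + ‖(γ : ℂ) * v - p‖ := by
          rw [norm_mul, Complex.norm_real, Real.norm_eq_abs]
  have h3 : |γ| * ‖v‖ ≤ |γ| * (Real.sqrt m / Real.sqrt α₁) :=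
    mul_le_mul_of_nonneg_left hv (abs_nonneg γ)
  have h4 : (|γ| / Real.sqrt α₁ + 1 / Real.sqrt β) * Real.sqrt m
      = |γ| * (Real.sqrt m / Real.sqrt α₁) + Real.sqrt m / Real.sqrt β := by ring
  linarith

lemma cs_interval {L : ℝ} (hL : 0 ≤ L) (g n : ℝ → ℝ)
    (hg : Continuous g) (hn : Continuous n) (hg0 : ∀ x, 0 ≤ g x) (hn0 : ∀ x, 0 ≤ n x) :
    (∫ x in (0:ℝ)..L, Real.sqrt (g x) * Real.sqrt (n x)) ≤
      Real.sqrt (∫ x in (0:ℝ)..L, g x) * Real.sqrt (∫ x in (0:ℝ)..L, n x) := by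
  set A := ∫ x in (0:ℝ)..L, g x with hA
  set B := ∫ x in (0:ℝ)..L, n x with hB
  set S := ∫ x in (0:ℝ)..L, Real.sqrt (g x) * Real.sqrt (n x) with hS
  have hgi : IntervalIntegrable g MeasureTheory.volume 0 L := hg.intervalIntegrable 0 L
  have hni : IntervalIntegrable n MeasureTheory.volume 0 L := hn.intervalIntegrable 0 L
  have hsi : IntervalIntegrable (fun x => Real.sqrt (g x) * Real.sqrt (n x))
      MeasureTheory.volume 0 L :=
    ((hg.sqrt).mul (hn.sqrt)).intervalIntegrable 0 L
  have hA0 : 0 ≤ A := intervalIntegral.integral_nonneg hL (fun x _ => hg0 x)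
  have hB0 : 0 ≤ B := intervalIntegral.integral_nonneg hL (fun x _ => hn0 x)
  have key : ∀ t : ℝ, 0 ≤ A - 2 * t * S + t ^ 2 * B := by
    intro t
    have h0 : (0:ℝ) ≤ ∫ x in (0:ℝ)..L, (Real.sqrt (g x) - t * Real.sqrt (n x)) ^ 2 :=
      intervalIntegral.integral_nonneg hL (fun x _ => sq_nonneg _)
    have hexp : (∫ x in (0:ℝ)..L, (Real.sqrt (g x) - t * Real.sqrt (n x)) ^ 2)
        = A - 2 * t * S + t ^ 2 * B := by
      have : (fun x => (Real.sqrt (g x) - t * Real.sqrt (n x)) ^ 2)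
          = (fun x => g x - 2 * t * (Real.sqrt (g x) * Real.sqrt (n x)) + t ^ 2 * n x) := by
        funext x
        have h1 : Real.sqrt (g x) ^ 2 = g x := Real.sq_sqrt (hg0 x)
        have h2 : Real.sqrt (n x) ^ 2 = n x := Real.sq_sqrt (hn0 x)
        ring_nf
        nlinarith [h1, h2]
      rw [this]
      rw [intervalIntegral.integral_add ((hgi.sub (hsi.const_mul _))) (hni.const_mul _),
        intervalIntegral.integral_sub hgi (hsi.const_mul _),
        intervalIntegral.integral_const_mul, intervalIntegral.integral_const_mul]
    linarith [hexp ▸ h0]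
  rcases le_or_gt S 0 with hS0 | hS0
  · exact le_trans hS0 (by positivity)
  · have hBpos : 0 < B := by
      by_contra hb
      push_neg at hb
      have hB0' : B = 0 := le_antisymm hb hB0
      have := key ((A + 1) / (2 * S))
      rw [hB0'] at this
      have hAS : 2 * ((A + 1) / (2 * S)) * S = A + 1 := by
        field_simp
      nlinarith
    have h2 : S ^ 2 ≤ A * B := by
      have := key (S / B)
      have e1 : 2 * (S / B) * S = 2 * S ^ 2 / B := by ring
      have e2 : (S / B) ^ 2 * B = S ^ 2 / B := by field_simp
      have e3 : 2 * S ^ 2 / B = 2 * (S ^ 2 / B) := by ring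
      rw [e1, e2, e3] at this
      have h4 : S ^ 2 / B ≤ A := by linarith
      nlinarith [(div_le_iff₀ hBpos).1 h4]
    calc S = Real.sqrt (S ^ 2) := (Real.sqrt_sq hS0.le).symm
      _ ≤ Real.sqrt (A * B) := Real.sqrt_le_sqrt h2
      _ = Real.sqrt A * Real.sqrt B := Real.sqrt_mul hA0 B

lemma main_aux {L : ℝ} (hL : 0 ≤ L) (c₀ Q a b c d : ℝ)
    (hc₀ : 0 ≤ c₀) (hQ : 0 ≤ Q) (ha : 0 ≤ a) (hb : 0 ≤ b) (hc : 0 ≤ c) (hd : 0 ≤ d)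
    (q : ℝ → ℝ) (hqc : Continuous q) (hqb : ∀ x ∈ Set.Icc (0:ℝ) L, |q x| ≤ Q)
    (g n : ℝ → ℝ) (hg : Continuous g) (hn : Continuous n)
    (hg0 : ∀ x, 0 ≤ g x) (hn0 : ∀ x, 0 ≤ n x)
    (A B C D : ℝ → ℂ) (hA : Continuous A) (hB : Continuous B)
    (hC : Continuous C) (hD : Continuous D)
    (hAb : ∀ x, ‖A x‖ ≤ a * Real.sqrt (g x)) (hBb : ∀ x, ‖B x‖ ≤ b * Real.sqrt (n x))
    (hCb : ∀ x, ‖C x‖ ≤ c * Real.sqrt (g x)) (hDb : ∀ x, ‖D x‖ ≤ d * Real.sqrt (n x)) :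
    |(∫ x in (0:ℝ)..L, (((c₀:ℂ)) * ((q x : ℝ):ℂ)
        * (A x * starRingEnd ℂ (B x) + starRingEnd ℂ (C x) * D x))).re|
      ≤ c₀ * Q * (a * b + c * d)
        * (Real.sqrt (∫ x in (0:ℝ)..L, g x) * Real.sqrt (∫ x in (0:ℝ)..L, n x)) := by
  set I : ℝ → ℂ := fun x => ((c₀:ℂ)) * ((q x : ℝ):ℂ)
      * (A x * starRingEnd ℂ (B x) + starRingEnd ℂ (C x) * D x) with hI
  have hIc : Continuous I := by
    apply Continuous.mul
    · exact continuous_const.mul (Complex.continuous_ofReal.comp hqc)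
    · apply Continuous.add
      · exact hA.mul (Complex.continuous_conj.comp hB)
      · exact (Complex.continuous_conj.comp hC).mul hD
  have hptwise : ∀ x ∈ Set.Icc (0:ℝ) L,
      ‖I x‖ ≤ c₀ * Q * (a * b + c * d) * (Real.sqrt (g x) * Real.sqrt (n x)) := by
    intro x hx
    have hE : ‖A x * starRingEnd ℂ (B x) + starRingEnd ℂ (C x) * D x‖
        ≤ (a * b + c * d) * (Real.sqrt (g x) * Real.sqrt (n x)) := by
      calc ‖A x * starRingEnd ℂ (B x) + starRingEnd ℂ (C x) * D x‖
          ≤ ‖A x * starRingEnd ℂ (B x)‖ + ‖starRingEnd ℂ (C x) * D x‖ := norm_add_le _ _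
        _ = ‖A x‖ * ‖B x‖ + ‖C x‖ * ‖D x‖ := by rw [norm_mul, norm_mul, RCLike.norm_conj,
            RCLike.norm_conj]
        _ ≤ (a * Real.sqrt (g x)) * (b * Real.sqrt (n x))
            + (c * Real.sqrt (g x)) * (d * Real.sqrt (n x)) :=
            add_le_add (mul_le_mul (hAb x) (hBb x) (norm_nonneg _) (by positivity))
              (mul_le_mul (hCb x) (hDb x) (norm_nonneg _) (by positivity))
        _ = (a * b + c * d) * (Real.sqrt (g x) * Real.sqrt (n x)) := by ring
    have hnorm : ‖I x‖ = c₀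
        * (|q x| * ‖A x * starRingEnd ℂ (B x) + starRingEnd ℂ (C x) * D x‖) := by
      rw [hI]
      simp only [norm_mul, Complex.norm_real, Real.norm_eq_abs]
      rw [_root_.abs_of_nonneg hc₀]
      ring
    rw [hnorm]
    calc c₀ * (|q x| * ‖A x * starRingEnd ℂ (B x) + starRingEnd ℂ (C x) * D x‖)
        ≤ c₀ * (Q * ((a * b + c * d) * (Real.sqrt (g x) * Real.sqrt (n x)))) := by
          apply mul_le_mul_of_nonneg_left _ hc₀
          exact mul_le_mul (hqb x hx) hE (norm_nonneg _) hQ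
      _ = c₀ * Q * (a * b + c * d) * (Real.sqrt (g x) * Real.sqrt (n x)) := by ring
  have hKnn : 0 ≤ c₀ * Q * (a * b + c * d) := by positivity
  calc |(∫ x in (0:ℝ)..L, I x).re|
      ≤ ‖∫ x in (0:ℝ)..L, I x‖ := Complex.abs_re_le_norm _
    _ = ‖∫ x in (0:ℝ)..L, I x‖ := rfl
    _ ≤ ∫ x in (0:ℝ)..L, ‖I x‖ := intervalIntegral.norm_integral_le_integral_norm hL
    _ ≤ ∫ x in (0:ℝ)..L, c₀ * Q * (a * b + c * d) * (Real.sqrt (g x) * Real.sqrt (n x)) := by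
        apply intervalIntegral.integral_mono_on hL
          (hIc.norm.intervalIntegrable 0 L)
          ((continuous_const.mul (hg.sqrt.mul hn.sqrt)).intervalIntegrable 0 L)
          hptwise
    _ = c₀ * Q * (a * b + c * d) * ∫ x in (0:ℝ)..L, Real.sqrt (g x) * Real.sqrt (n x) :=
        intervalIntegral.integral_const_mul _ _
    _ ≤ c₀ * Q * (a * b + c * d)
        * (Real.sqrt (∫ x in (0:ℝ)..L, g x) * Real.sqrt (∫ x in (0:ℝ)..L, n x)) :=
        mul_le_mul_of_nonneg_left (cs_interval hL g n hg hn hg0 hn0) hKnn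

end Helpers

/-- Bound on the remainder terms (estimate (4.42)): `|R₁| ≤ C N ‖F‖` and
`|R₂| ≤ C N ‖F‖`, where `C` depends only on `ρ, μ, α₁, β, γ` and `sup |q|`, not on
the resolvent data or on `λ`. -/
theorem remainder_terms_bound
    (ρ μ β m₁ m₂ ξ₁ ξ₂ γ α₁ α L : ℝ)
    (hρ : 0 < ρ) (hμ : 0 < μ) (hβ : 0 < β) (hm₁ : 0 < m₁) (hm₂ : 0 < m₂)
    (hξ₁ : 0 < ξ₁) (hξ₂ : 0 < ξ₂) (hL : 0 < L) (hα₁ : 0 < α₁)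
    (hα : α = α₁ + γ ^ 2 * β)
    (q : ℝ → ℝ) (hq : ContDiff ℝ 1 q) (hq0 : q 0 = 0) :
    ∃ C > 0, ∀ (lam : ℝ) (D : ResolventData ρ μ β m₁ m₂ ξ₁ ξ₂ γ α₁ α L lam),
      |(∫ x in (0:ℝ)..L,
          (2 * (μ : ℂ) * (q x : ℂ) * (D.f₄ x * starRingEnd ℂ (deriv D.P x)
            + starRingEnd ℂ (deriv D.f₃ x) * D.Θ x))).re|
        ≤ C * Real.sqrt (Nsq D) * Real.sqrt (Fsq D) ∧
      |(∫ x in (0:ℝ)..L,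
          (2 * (ρ : ℂ) * (q x : ℂ) * (D.f₂ x * starRingEnd ℂ (deriv D.V x)
            + D.Φ x * starRingEnd ℂ (deriv D.f₁ x)))).re|
        ≤ C * Real.sqrt (Nsq D) * Real.sqrt (Fsq D) := by
  obtain ⟨Q₀, hQ₀⟩ := isCompact_Icc.exists_bound_of_continuousOn
    (hq.continuous.continuousOn : ContinuousOn q (Set.Icc (0:ℝ) L))
  set Q := max Q₀ 0 with hQdef
  have hQnn : 0 ≤ Q := le_max_right _ _
  have hqb : ∀ x ∈ Set.Icc (0:ℝ) L, |q x| ≤ Q := fun x hx =>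
    le_trans (by simpa [Real.norm_eq_abs] using hQ₀ x hx) (le_max_left _ _)
  set cP := |γ| / Real.sqrt α₁ + 1 / Real.sqrt β with hcP
  have hcP0 : 0 ≤ cP := by rw [hcP]; positivity
  set K₁ := 2 * μ * Q * ((1 / Real.sqrt μ) * cP + cP * (1 / Real.sqrt μ)) with hK₁
  set K₂ := 2 * ρ * Q * ((1 / Real.sqrt ρ) * (1 / Real.sqrt α₁)
      + (1 / Real.sqrt α₁) * (1 / Real.sqrt ρ)) with hK₂
  have hK₁0 : 0 ≤ K₁ := by
    rw [hK₁]
    apply mul_nonneg (mul_nonneg (by positivity) hQnn)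
    have h1 : (0:ℝ) ≤ 1 / Real.sqrt μ := by positivity
    exact add_nonneg (mul_nonneg h1 hcP0) (mul_nonneg hcP0 h1)
  have hK₂0 : 0 ≤ K₂ := by
    rw [hK₂]
    apply mul_nonneg (mul_nonneg (by positivity) hQnn)
    positivity
  have hC0 : 0 ≤ max K₁ K₂ := le_trans hK₁0 (le_max_left _ _)
  refine ⟨max K₁ K₂ + 1, by linarith, ?_⟩
  intro lam D
  have hdf₁ : Continuous (deriv D.f₁) := D.hf₁.continuous_deriv le_rfl
  have hdf₃ : Continuous (deriv D.f₃) := D.hf₃.continuous_deriv le_rfl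
  have hdV : Continuous (deriv D.V) := D.hV.continuous_deriv (by norm_num)
  have hdP : Continuous (deriv D.P) := D.hP.continuous_deriv (by norm_num)
  set g : ℝ → ℝ := fun x => ρ * ‖D.f₂ x‖ ^ 2 + μ * ‖D.f₄ x‖ ^ 2
      + α₁ * ‖deriv D.f₁ x‖ ^ 2 + β * ‖(γ : ℂ) * deriv D.f₁ x - deriv D.f₃ x‖ ^ 2 with hgdef
  set n : ℝ → ℝ := fun x => ρ * ‖D.Φ x‖ ^ 2 + μ * ‖D.Θ x‖ ^ 2
      + α₁ * ‖deriv D.V x‖ ^ 2 + β * ‖(γ : ℂ) * deriv D.V x - deriv D.P x‖ ^ 2 with hndef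
  have hgx : ∀ x, g x = ρ * ‖D.f₂ x‖ ^ 2 + μ * ‖D.f₄ x‖ ^ 2
      + α₁ * ‖deriv D.f₁ x‖ ^ 2 + β * ‖(γ : ℂ) * deriv D.f₁ x - deriv D.f₃ x‖ ^ 2 :=
    fun _ => rfl
  have hnx : ∀ x, n x = ρ * ‖D.Φ x‖ ^ 2 + μ * ‖D.Θ x‖ ^ 2
      + α₁ * ‖deriv D.V x‖ ^ 2 + β * ‖(γ : ℂ) * deriv D.V x - deriv D.P x‖ ^ 2 :=
    fun _ => rfl
  have hgc : Continuous g :=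
    (((continuous_const.mul (D.hf₂.norm.pow 2)).add
      (continuous_const.mul (D.hf₄.norm.pow 2))).add
      (continuous_const.mul (hdf₁.norm.pow 2))).add
      (continuous_const.mul (((continuous_const.mul hdf₁).sub hdf₃).norm.pow 2))
  have hnc : Continuous n :=
    (((continuous_const.mul (D.hΦ.continuous.norm.pow 2)).add
      (continuous_const.mul (D.hΘ.continuous.norm.pow 2))).add
      (continuous_const.mul (hdV.norm.pow 2))).add
      (continuous_const.mul (((continuous_const.mul hdV).sub hdP).norm.pow 2))
  have hg0 : ∀ x, 0 ≤ g x := by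
    intro x; rw [hgx x]; positivity
  have hn0 : ∀ x, 0 ≤ n x := by
    intro x; rw [hnx x]; positivity
  -- each term dominated by g x resp. n x
  have hgdom : ∀ x, ρ * ‖D.f₂ x‖ ^ 2 ≤ g x ∧ μ * ‖D.f₄ x‖ ^ 2 ≤ g x ∧
      α₁ * ‖deriv D.f₁ x‖ ^ 2 ≤ g x ∧
      β * ‖(γ : ℂ) * deriv D.f₁ x - deriv D.f₃ x‖ ^ 2 ≤ g x := by
    intro x
    have h1 : (0:ℝ) ≤ ρ * ‖D.f₂ x‖ ^ 2 := by positivity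
    have h2 : (0:ℝ) ≤ μ * ‖D.f₄ x‖ ^ 2 := by positivity
    have h3 : (0:ℝ) ≤ α₁ * ‖deriv D.f₁ x‖ ^ 2 := by positivity
    have h4 : (0:ℝ) ≤ β * ‖(γ : ℂ) * deriv D.f₁ x - deriv D.f₃ x‖ ^ 2 := by positivity
    refine ⟨?_, ?_, ?_, ?_⟩ <;> (rw [hgx x]; linarith)
  have hndom : ∀ x, ρ * ‖D.Φ x‖ ^ 2 ≤ n x ∧ μ * ‖D.Θ x‖ ^ 2 ≤ n x ∧
      α₁ * ‖deriv D.V x‖ ^ 2 ≤ n x ∧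
      β * ‖(γ : ℂ) * deriv D.V x - deriv D.P x‖ ^ 2 ≤ n x := by
    intro x
    have h1 : (0:ℝ) ≤ ρ * ‖D.Φ x‖ ^ 2 := by positivity
    have h2 : (0:ℝ) ≤ μ * ‖D.Θ x‖ ^ 2 := by positivity
    have h3 : (0:ℝ) ≤ α₁ * ‖deriv D.V x‖ ^ 2 := by positivity
    have h4 : (0:ℝ) ≤ β * ‖(γ : ℂ) * deriv D.V x - deriv D.P x‖ ^ 2 := by positivity
    refine ⟨?_, ?_, ?_, ?_⟩ <;> (rw [hnx x]; linarith)
  have hNn : Nsq D = ∫ x in (0:ℝ)..L, n x := by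
    rfl
  have hFg : (∫ x in (0:ℝ)..L, g x) ≤ Fsq D := by
    have hFsq : Fsq D = (∫ x in (0:ℝ)..L, g x) + m₁ * ‖D.f₅‖ ^ 2 + m₂ * ‖D.f₆‖ ^ 2 := by
      rfl
    have h5 : (0:ℝ) ≤ m₁ * ‖D.f₅‖ ^ 2 := by positivity
    have h6 : (0:ℝ) ≤ m₂ * ‖D.f₆‖ ^ 2 := by positivity
    linarith [hFsq.ge, hFsq.le]
  have hsqrtg : Real.sqrt (∫ x in (0:ℝ)..L, g x) ≤ Real.sqrt (Fsq D) :=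
    Real.sqrt_le_sqrt hFg
  -- pointwise bounds
  have hf4b : ∀ x, ‖D.f₄ x‖ ≤ (1 / Real.sqrt μ) * Real.sqrt (g x) :=
    fun x => sqrt_bound' hμ (hgdom x).2.1
  have hΘb : ∀ x, ‖D.Θ x‖ ≤ (1 / Real.sqrt μ) * Real.sqrt (n x) :=
    fun x => sqrt_bound' hμ (hndom x).2.1
  have hf2b : ∀ x, ‖D.f₂ x‖ ≤ (1 / Real.sqrt ρ) * Real.sqrt (g x) :=
    fun x => sqrt_bound' hρ (hgdom x).1
  have hΦb : ∀ x, ‖D.Φ x‖ ≤ (1 / Real.sqrt ρ) * Real.sqrt (n x) :=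
    fun x => sqrt_bound' hρ (hndom x).1
  have hVb : ∀ x, ‖deriv D.V x‖ ≤ (1 / Real.sqrt α₁) * Real.sqrt (n x) :=
    fun x => sqrt_bound' hα₁ (hndom x).2.2.1
  have hf1b : ∀ x, ‖deriv D.f₁ x‖ ≤ (1 / Real.sqrt α₁) * Real.sqrt (g x) :=
    fun x => sqrt_bound' hα₁ (hgdom x).2.2.1
  have hPb : ∀ x, ‖deriv D.P x‖ ≤ cP * Real.sqrt (n x) := by
    intro x; rw [hcP]
    exact decomp_bound hα₁ hβ (hndom x).2.2.1 (hndom x).2.2.2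
  have hf3b : ∀ x, ‖deriv D.f₃ x‖ ≤ cP * Real.sqrt (g x) := by
    intro x; rw [hcP]
    exact decomp_bound hα₁ hβ (hgdom x).2.2.1 (hgdom x).2.2.2
  constructor
  · -- R₁
    have hcongr : (∫ x in (0:ℝ)..L,
        (2 * (μ : ℂ) * ((q x : ℝ) : ℂ) * (D.f₄ x * starRingEnd ℂ (deriv D.P x)
          + starRingEnd ℂ (deriv D.f₃ x) * D.Θ x)))
        = ∫ x in (0:ℝ)..L, ((((2 * μ : ℝ)) : ℂ) * ((q x : ℝ) : ℂ)
          * (D.f₄ x * starRingEnd ℂ (deriv D.P x)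
            + starRingEnd ℂ (deriv D.f₃ x) * D.Θ x)) :=
      intervalIntegral.integral_congr (fun x _ => by push_cast; ring)
    rw [hcongr]
    have Hmain := main_aux hL.le (2 * μ) Q (1 / Real.sqrt μ) cP cP (1 / Real.sqrt μ)
      (by positivity) hQnn (by positivity) hcP0 hcP0 (by positivity)
      q hq.continuous hqb g n hgc hnc hg0 hn0
      D.f₄ (deriv D.P) (deriv D.f₃) D.Θ D.hf₄ hdP hdf₃ D.hΘ.continuous
      hf4b hPb hf3b hΘb
    rw [← hK₁, ← hNn] at Hmain
    calc _ ≤ K₁ * (Real.sqrt (∫ x in (0:ℝ)..L, g x) * Real.sqrt (Nsq D)) := Hmain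
      _ ≤ K₁ * (Real.sqrt (Fsq D) * Real.sqrt (Nsq D)) :=
          mul_le_mul_of_nonneg_left
            (mul_le_mul_of_nonneg_right hsqrtg (Real.sqrt_nonneg _)) hK₁0
      _ ≤ (max K₁ K₂ + 1) * (Real.sqrt (Fsq D) * Real.sqrt (Nsq D)) :=
          mul_le_mul_of_nonneg_right
            (by have := le_max_left K₁ K₂; linarith) (by positivity)
      _ = (max K₁ K₂ + 1) * Real.sqrt (Nsq D) * Real.sqrt (Fsq D) := by ring
  · -- R₂
    have hcongr : (∫ x in (0:ℝ)..L,
        (2 * (ρ : ℂ) * ((q x : ℝ) : ℂ) * (D.f₂ x * starRingEnd ℂ (deriv D.V x)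
          + D.Φ x * starRingEnd ℂ (deriv D.f₁ x))))
        = ∫ x in (0:ℝ)..L, ((((2 * ρ : ℝ)) : ℂ) * ((q x : ℝ) : ℂ)
          * (D.f₂ x * starRingEnd ℂ (deriv D.V x)
            + starRingEnd ℂ (deriv D.f₁ x) * D.Φ x)) :=
      intervalIntegral.integral_congr (fun x _ => by push_cast; ring)
    rw [hcongr]
    have Hmain := main_aux hL.le (2 * ρ) Q (1 / Real.sqrt ρ) (1 / Real.sqrt α₁)
      (1 / Real.sqrt α₁) (1 / Real.sqrt ρ)
      (by positivity) hQnn (by positivity) (by positivity) (by positivity) (by positivity)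
      q hq.continuous hqb g n hgc hnc hg0 hn0
      D.f₂ (deriv D.V) (deriv D.f₁) D.Φ D.hf₂ hdV hdf₁ D.hΦ.continuous
      hf2b hVb hf1b hΦb
    rw [← hK₂, ← hNn] at Hmain
    calc _ ≤ K₂ * (Real.sqrt (∫ x in (0:ℝ)..L, g x) * Real.sqrt (Nsq D)) := Hmain
      _ ≤ K₂ * (Real.sqrt (Fsq D) * Real.sqrt (Nsq D)) :=
          mul_le_mul_of_nonneg_left
            (mul_le_mul_of_nonneg_right hsqrtg (Real.sqrt_nonneg _)) hK₂0
      _ ≤ (max K₁ K₂ + 1) * (Real.sqrt (Fsq D) * Real.sqrt (Nsq D)) :=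
          mul_le_mul_of_nonneg_right
            (by have := le_max_right K₁ K₂; linarith) (by positivity)
      _ = (max K₁ K₂ + 1) * Real.sqrt (Nsq D) * Real.sqrt (Fsq D) := by ring
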